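/- arXiv:2009.13128 — 2 statements merged into one kernel-verified Lean document; each statement's English description precedes it below -/
import Mathlib

section
/- Let D be a simple pMC over a finite parameter set X with target set T, and let val : X → (0,1) be a graph-preserving valuation. Then Pr_{D[val]}(◇T) > 0 if and only if there exists a well-defined valuation val' : X → [0,1] with Pr_{D[val']}(◇T) > 0. -/
/-- A finite path in state space `S`: a length `m` together with `m + 1` states. -/
abbrev MCPath (S : Type) : Type := Σ m : ℕ, Fin (m + 1) → S

/-- The mass of a path: the product of the transition probabilities along it. -/
def pathMass {S : Type} (P : S → S → ℝ) (π : MCPath S) : ℝ :=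
  ∏ i : Fin π.1, P (π.2 i.castSucc) (π.2 i.succ)

/-- A hitting path from `s` to `T`: it starts in `s`, ends in `T`, and no proper prefix
visits `T`. -/
def IsHitting {S : Type} (T : Set S) (s : S) (π : MCPath S) : Prop :=
  π.2 0 = s ∧ π.2 (Fin.last π.1) ∈ T ∧ ∀ i : Fin π.1, π.2 i.castSucc ∉ T

/-- The reachability probability `Pr_{P,s}(◇T)`: the sum of the masses of all hitting
paths from `s` to `T`. -/
noncomputable def reachProb {S : Type} (P : S → S → ℝ) (T : Set S) (s : S) : ℝ :=
  ∑' π : {π : MCPath S // IsHitting T s π}, pathMass P π.1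

/-- An entry of a simple pMC: a nonnegative rational constant, a variable `x`, or `1 - x`. -/
def SimpleEntry {X : Type} (p : MvPolynomial X ℚ) : Prop :=
  (∃ q : ℚ, 0 ≤ q ∧ p = MvPolynomial.C q) ∨
  (∃ x : X, p = MvPolynomial.X x) ∨
  (∃ x : X, p = 1 - MvPolynomial.X x)

/-- A simple parametric Markov chain over parameter set `X` with `n` states:
all transition polynomials are simple entries and every row sums to `1` as a polynomial. -/
structure SimplePMC (X : Type) (n : ℕ) where
  init : Fin n
  P : Fin n → Fin n → MvPolynomial X ℚ
  simple : ∀ s s', SimpleEntry (P s s')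
  rowSum : ∀ s, ∑ s', P s s' = 1

/-- A valuation is well-defined if every parameter value lies in `[0,1]`. -/
def WDVal {X : Type} (val : X → ℝ) : Prop := ∀ x, val x ∈ Set.Icc (0 : ℝ) 1

/-- A valuation is graph-preserving if every parameter value lies in `(0,1)`. -/
def GPVal {X : Type} (val : X → ℝ) : Prop := ∀ x, val x ∈ Set.Ioo (0 : ℝ) 1

/-- The transition matrix of the instantiation `D[val]`. -/
noncomputable def instP {X : Type} {n : ℕ} (D : SimplePMC X n) (val : X → ℝ) :
    Fin n → Fin n → ℝ :=
  fun s s' => MvPolynomial.aeval val (D.P s s')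

lemma pathMass_nonneg {S : Type} {P : S → S → ℝ} (h0 : ∀ s s', 0 ≤ P s s')
    (π : MCPath S) : 0 ≤ pathMass P π :=
  Finset.prod_nonneg fun _ _ => h0 _ _

def pTail {S : Type} : MCPath S → MCPath S
  | ⟨0, f⟩ => ⟨0, f⟩
  | ⟨m+1, f⟩ => ⟨m, fun i => f i.succ⟩

lemma hitting_len_zero {S : Type} {T : Set S} {s : S} {π : MCPath S}
    (h : IsHitting T s π) (h0 : π.1 = 0) : π = ⟨0, fun _ => s⟩ := by
  obtain ⟨m, f⟩ := π
  dsimp at h0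
  subst h0
  have : f = fun _ => s := by
    funext i
    have : i = 0 := by omega
    rw [this]; exact h.1
  rw [this]

lemma pathMass_zero {S : Type} (P : S → S → ℝ) (f : Fin 1 → S) :
    pathMass P ⟨0, f⟩ = 1 := by
  simp [pathMass]

lemma pathMass_succ {S : Type} (P : S → S → ℝ) (m : ℕ) (f : Fin (m + 2) → S) :
    pathMass P ⟨m+1, f⟩ = P (f 0) (f 1) * pathMass P (⟨m, fun i => f i.succ⟩ : MCPath S) := by
  unfold pathMass
  rw [show (∏ i : Fin (m+1), P ((⟨m+1, f⟩ : MCPath S).2 i.castSucc) ((⟨m+1, f⟩ : MCPath S).2 i.succ))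
      = ∏ i : Fin (m+1), P (f i.castSucc) (f i.succ) from rfl,
    Fin.prod_univ_succ]
  simp [Fin.succ_castSucc, -Fin.castSucc_succ]

lemma hitting_tail {S : Type} {T : Set S} {s : S} {m : ℕ} {f : Fin (m + 2) → S}
    (h : IsHitting T s ⟨m+1, f⟩) :
    IsHitting T (f 1) (⟨m, fun i => f i.succ⟩ : MCPath S) := by
  obtain ⟨h1, h2, h3⟩ := h
  refine ⟨by simp, ?_, ?_⟩
  · show f (Fin.last m).succ ∈ T
    rw [Fin.succ_last]; exact h2
  · intro i
    show f i.castSucc.succ ∉ T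
    rw [Fin.succ_castSucc]
    exact h3 i.succ

lemma pTail_inj {S : Type} {s : S} {π π' : MCPath S}
    (h : π.2 0 = s) (h' : π'.2 0 = s) (hm : π.1 ≠ 0) (hm' : π'.1 ≠ 0)
    (ht : pTail π = pTail π') : π = π' := by
  obtain ⟨m, f⟩ := π
  obtain ⟨m', f'⟩ := π'
  dsimp at hm hm' h h'
  match m, hm, m', hm' with
  | m+1, _, m'+1, _ =>
    simp only [pTail] at ht
    obtain ⟨h1, h2⟩ := Sigma.mk.inj_iff.mp ht
    subst h1
    have h2' : (fun i : Fin (m+1) => f i.succ) = fun i => f' i.succ := eq_of_heq h2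
    have : f = f' := by
      funext j
      induction j using Fin.cases with
      | zero => rw [h, h']
      | succ i => exact congrFun h2' i
    rw [this]

lemma sum_mass_le_one {n : ℕ} (P : Fin n → Fin n → ℝ)
    (h0 : ∀ s s', 0 ≤ P s s') (h1 : ∀ s, ∑ s', P s s' = 1) (T : Set (Fin n)) :
    ∀ (N : ℕ) (s : Fin n) (F : Finset (MCPath (Fin n))),
      (∀ π ∈ F, IsHitting T s π ∧ π.1 ≤ N) → ∑ π ∈ F, pathMass P π ≤ 1 := by
  have triv : ∀ (s : Fin n) (F : Finset (MCPath (Fin n))),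
      (∀ π ∈ F, π = (⟨0, fun _ => s⟩ : MCPath (Fin n))) → ∑ π ∈ F, pathMass P π ≤ 1 := by
    intro s F hF
    calc ∑ π ∈ F, pathMass P π ≤ ∑ π ∈ {(⟨0, fun _ => s⟩ : MCPath (Fin n))}, pathMass P π := by
          apply Finset.sum_le_sum_of_subset_of_nonneg
          · intro π hπ; simp [hF π hπ]
          · intro π _ _; exact pathMass_nonneg h0 π
      _ = 1 := by rw [Finset.sum_singleton, pathMass_zero]
  intro N
  induction N with
  | zero =>
    intro s F hF
    exact triv s F fun π hπ => hitting_len_zero (hF π hπ).1 (Nat.le_zero.mp (hF π hπ).2)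
  | succ N ih =>
    intro s F hF
    by_cases hsT : s ∈ T
    · refine triv s F fun π hπ => hitting_len_zero (hF π hπ).1 ?_
      by_contra hz
      obtain ⟨m, f⟩ := π
      dsimp at hz
      match m, hz with
      | m+1, _ =>
        have := ((hF _ hπ).1).2.2 0
        simp only [Fin.castSucc_zero] at this
        have h1'' : f 0 = s := (hF _ hπ).1.1
        rw [h1''] at this
        exact this hsT
    · -- every path in F has positive length
      have hlen : ∀ π ∈ F, π.1 ≠ 0 := by
        intro π hπ hz
        have := hitting_len_zero (hF π hπ).1 hz
        subst this
        exact hsT ((hF _ hπ).1.2.1)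
      classical
      have key : ∀ π ∈ F, pathMass P π = P s ((pTail π).2 0) * pathMass P (pTail π)
          ∧ IsHitting T ((pTail π).2 0) (pTail π) ∧ (pTail π).1 ≤ N := by
        intro π hπ
        obtain ⟨m, f⟩ := π
        have hz := hlen _ hπ
        dsimp at hz
        match m, hz with
        | m+1, _ =>
          obtain ⟨hhit, hle⟩ := hF _ hπ
          have h1'' : f 0 = s := hhit.1
          simp only [pTail]
          refine ⟨?_, ?_, Nat.succ_le_succ_iff.mp hle⟩
          · show pathMass P ⟨m+1, f⟩ = P s (f (0 : Fin (m+1)).succ) * pathMass P ⟨m, fun i => f i.succ⟩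
            rw [Fin.succ_zero_eq_one, pathMass_succ, h1'']
          · show IsHitting T (f (0 : Fin (m+1)).succ) (⟨m, fun i => f i.succ⟩ : MCPath (Fin n))
            rw [Fin.succ_zero_eq_one]
            exact hitting_tail hhit
      calc ∑ π ∈ F, pathMass P π
          = ∑ t : Fin n, ∑ π ∈ F.filter (fun π => (pTail π).2 0 = t), pathMass P π :=
            (Finset.sum_fiberwise F (fun π => (pTail π).2 0) (pathMass P)).symm
        _ ≤ ∑ t : Fin n, P s t := by
            apply Finset.sum_le_sum
            intro t _
            have : ∑ π ∈ F.filter (fun π => (pTail π).2 0 = t), pathMass P π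
                = P s t * ∑ π ∈ F.filter (fun π => (pTail π).2 0 = t), pathMass P (pTail π) := by
              rw [Finset.mul_sum]
              apply Finset.sum_congr rfl
              intro π hπ
              obtain ⟨hπF, hπt⟩ := Finset.mem_filter.mp hπ
              rw [(key π hπF).1, hπt]
            rw [this]
            have himg : ∑ π ∈ F.filter (fun π => (pTail π).2 0 = t), pathMass P (pTail π)
                = ∑ σ ∈ (F.filter (fun π => (pTail π).2 0 = t)).image pTail, pathMass P σ := by
              rw [Finset.sum_image]
              intro x hx y hy hxy
              obtain ⟨hxF, _⟩ := Finset.mem_filter.mp hx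
              obtain ⟨hyF, _⟩ := Finset.mem_filter.mp hy
              exact pTail_inj (hF x hxF).1.1 (hF y hyF).1.1 (hlen x hxF) (hlen y hyF) hxy
            rw [himg]
            have hbound : ∑ σ ∈ (F.filter (fun π => (pTail π).2 0 = t)).image pTail, pathMass P σ ≤ 1 := by
              apply ih t
              intro σ hσ
              obtain ⟨π, hπ, rfl⟩ := Finset.mem_image.mp hσ
              obtain ⟨hπF, hπt⟩ := Finset.mem_filter.mp hπ
              refine ⟨?_, (key π hπF).2.2⟩
              rw [← hπt]
              exact (key π hπF).2.1
            calc P s t * ∑ σ ∈ (F.filter (fun π => (pTail π).2 0 = t)).image pTail, pathMass P σ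
                ≤ P s t * 1 := mul_le_mul_of_nonneg_left hbound (h0 s t)
              _ = P s t := mul_one _
        _ = 1 := h1 s

lemma instP_nonneg {X : Type} {n : ℕ} (D : SimplePMC X n) {val : X → ℝ}
    (hval : WDVal val) (s s' : Fin n) : 0 ≤ instP D val s s' := by
  rcases D.simple s s' with ⟨q, hq, hp⟩ | ⟨x, hp⟩ | ⟨x, hp⟩ <;>
    simp only [instP, hp, map_sub, map_one, MvPolynomial.aeval_C, MvPolynomial.aeval_X]
  · simpa using hq
  · exact (hval x).1
  · linarith [(hval x).2]

lemma instP_rowSum {X : Type} {n : ℕ} (D : SimplePMC X n) (val : X → ℝ) (s : Fin n) :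
    ∑ s', instP D val s s' = 1 := by
  simp only [instP, ← map_sum, D.rowSum s, map_one]

lemma instP_pos_transfer {X : Type} {n : ℕ} (D : SimplePMC X n) {val val' : X → ℝ}
    (hval : GPVal val) (s s' : Fin n) (h : 0 < instP D val' s s') :
    0 < instP D val s s' := by
  rcases D.simple s s' with ⟨q, hq, hp⟩ | ⟨x, hp⟩ | ⟨x, hp⟩ <;>
    simp only [instP, hp, map_sub, map_one, MvPolynomial.aeval_C, MvPolynomial.aeval_X] at h ⊢
  · exact h
  · exact (hval x).1
  · linarith [(hval x).2]

lemma reach_summable {n : ℕ} {P : Fin n → Fin n → ℝ}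
    (h0 : ∀ s s', 0 ≤ P s s') (h1 : ∀ s, ∑ s', P s s' = 1) (T : Set (Fin n)) (s : Fin n) :
    Summable (fun π : {π : MCPath (Fin n) // IsHitting T s π} => pathMass P π.1) := by
  apply summable_of_sum_le (c := 1)
  · intro π; exact pathMass_nonneg h0 π.1
  · intro u
    classical
    have : ∑ x ∈ u, pathMass P x.1
        = ∑ σ ∈ u.map ⟨Subtype.val, Subtype.val_injective⟩, pathMass P σ :=
      (Finset.sum_map u ⟨Subtype.val, Subtype.val_injective⟩ (pathMass P)).symm
    rw [this]
    apply sum_mass_le_one P h0 h1 T ((u.map ⟨Subtype.val, Subtype.val_injective⟩).sup Sigma.fst) s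
    intro π hπ
    obtain ⟨σ, hσ, rfl⟩ := Finset.mem_map.mp hπ
    exact ⟨σ.2, Finset.le_sup (Finset.mem_map_of_mem _ hσ)⟩

/-- Lemma 1 of the paper, specialized to simple pMCs: for a graph-preserving valuation `val`,
the reachability probability is positive iff it is positive for some well-defined valuation. -/
theorem gp_pos_reach_iff_exists_wd_pos_reach {X : Type} [Fintype X] {n : ℕ}
    (D : SimplePMC X n) (T : Set (Fin n)) (val : X → ℝ) (hval : GPVal val) :
    reachProb (instP D val) T D.init > 0 ↔
    ∃ val' : X → ℝ, WDVal val' ∧ reachProb (instP D val') T D.init > 0 := by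
  have hwd : WDVal val := fun x => ⟨(hval x).1.le, (hval x).2.le⟩
  constructor
  · intro h
    exact ⟨val, hwd, h⟩
  · rintro ⟨val', hwd', hpos⟩
    have h0' : ∀ s s', 0 ≤ instP D val' s s' := instP_nonneg D hwd'
    have h0 : ∀ s s', 0 ≤ instP D val s s' := instP_nonneg D hwd
    obtain ⟨π, hπpos⟩ : ∃ π : {π : MCPath (Fin n) // IsHitting T D.init π},
        0 < pathMass (instP D val') π.1 := by
      by_contra hc
      push_neg at hc
      have hz : ∀ π : {π : MCPath (Fin n) // IsHitting T D.init π},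
          pathMass (instP D val') π.1 = 0 :=
        fun π => le_antisymm (hc π) (pathMass_nonneg h0' π.1)
      rw [reachProb, tsum_congr hz, tsum_zero] at hpos
      exact lt_irrefl 0 hpos
    have hπpos2 : 0 < pathMass (instP D val) π.1 := by
      apply Finset.prod_pos
      intro i _
      apply instP_pos_transfer D hval
      rcases lt_or_eq_of_le (h0' (π.1.2 i.castSucc) (π.1.2 i.succ)) with h | h
      · exact h
      · exfalso
        have : pathMass (instP D val') π.1 = 0 :=
          Finset.prod_eq_zero (Finset.mem_univ i) h.symm
        rw [this] at hπpos
        exact lt_irrefl 0 hπpos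
    have hs : Summable (fun π : {π : MCPath (Fin n) // IsHitting T D.init π} =>
        pathMass (instP D val) π.1) :=
      reach_summable h0 (instP_rowSum D val) T D.init
    calc (0 : ℝ) < pathMass (instP D val) π.1 := hπpos2
      _ ≤ reachProb (instP D val) T D.init :=
        Summable.le_tsum hs π fun b _ => pathMass_nonneg h0 b.1
end

section
/- Let D = (n, ι, P) be a finite Markov chain with target set T and let λ ∈ [0,1] be a real number. Form the chain D' by adding three fresh states ι', t★ and ⊥, taking ι' as the new initial state, with transitions P'(ι', ι) = 1/2, P'(ι', t★) = (1 − λ)/2, P'(ι', ⊥) = λ/2, self-loops of probability 1 at t★ and ⊥, and all other transitions as in D. Then Pr_{D'}(◇(T ∪ {t★})) = (Pr_D(◇T) + 1 − λ)/2, and consequently for each relation ⋈ ∈ {<, ≤, ≥, >}: Pr_{D'}(◇(T ∪ {t★})) ⋈ 1/2 if and only if Pr_D(◇T) ⋈ λ. -/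
/-- The fixed-threshold gadget: extend a chain with transition matrix `P` and initial state
`ι` by three fresh states `ι' = inr 0`, `t★ = inr 1` and `⊥ = inr 2`, where `ι'` moves to `ι`
with probability `1/2`, to `t★` with probability `(1 - lam)/2` and to `⊥` with probability
`lam/2`, and `t★`, `⊥` carry probability-one self-loops. -/
noncomputable def extP {n : ℕ} (P : Fin n → Fin n → ℝ) (ι : Fin n) (lam : ℝ) :
    (Fin n ⊕ Fin 3) → (Fin n ⊕ Fin 3) → ℝ
  | .inl a, .inl b => P a b
  | .inl _, .inr _ => 0
  | .inr i, .inl b => if i = 0 ∧ b = ι then 1 / 2 else 0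
  | .inr i, .inr j =>
      if i = 0 ∧ j = 1 then (1 - lam) / 2
      else if i = 0 ∧ j = 2 then lam / 2
      else if i = 1 ∧ j = 1 then 1
      else if i = 2 ∧ j = 2 then 1
      else 0

section aux
variable {S : Type} [Fintype S] [DecidableEq S]

/-- mass of a path given as start state plus list of later states -/
def listMass (P : S → S → ℝ) : S → List S → ℝ
  | _, [] => 1
  | s, a :: l => P s a * listMass P a l

lemma listMass_nonneg {P : S → S → ℝ} (hP : ∀ a b, 0 ≤ P a b) :
    ∀ (s : S) (l : List S), 0 ≤ listMass P s l
  | _, [] => zero_le_one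
  | s, a :: l => mul_nonneg (hP s a) (listMass_nonneg hP a l)

lemma sum_listMass {P : S → S → ℝ} (hrow : ∀ s, ∑ s', P s s' = 1) :
    ∀ (N : ℕ) (s : S), ∑ f : Fin N → S, listMass P s (List.ofFn f) = 1
  | 0, s => by simp [listMass]
  | (N+1), s => by
    rw [Fintype.sum_equiv (Fin.consEquiv fun _ => S).symm
      (fun f => listMass P s (List.ofFn f))
      (fun p => P s p.1 * listMass P p.1 (List.ofFn p.2))
      (fun f => by
        show listMass P s (List.ofFn f) = P s (f 0) * listMass P (f 0) (List.ofFn (Fin.tail f))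
        rw [List.ofFn_succ]; rfl)]
    rw [Fintype.sum_prod_type]
    simp only [← Finset.mul_sum, sum_listMass hrow N, mul_one]
    exact hrow s

lemma listMass_append (P : S → S → ℝ) :
    ∀ (s : S) (l l' : List S),
      listMass P s (l ++ l') = listMass P s l * listMass P (l.getLastD s) l'
  | s, [], l' => by simp [listMass]
  | s, a :: l, l' => by
    simp only [List.cons_append, listMass, List.append_eq, listMass_append P a l l',
      List.getLastD_cons, mul_assoc]

lemma sum_listMass_ext {P : S → S → ℝ} (hrow : ∀ s, ∑ s', P s s' = 1)
    (s : S) (l : List S) (k : ℕ) :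
    ∑ f : Fin k → S, listMass P s (l ++ List.ofFn f) = listMass P s l := by
  simp only [listMass_append, ← Finset.mul_sum, sum_listMass hrow, mul_one]

set_option linter.unusedSectionVars false

lemma prod_eq_listMass (P : S → S → ℝ) :
    ∀ (m : ℕ) (v : Fin (m + 1) → S),
      ∏ i : Fin m, P (v i.castSucc) (v i.succ)
        = listMass P (v 0) (List.ofFn fun i : Fin m => v i.succ)
  | 0, v => by simp [listMass]
  | (m+1), v => by
    rw [Fin.prod_univ_succ, List.ofFn_succ]
    show P (v 0) (v 1) * _ = P (v 0) (v 1) * listMass P (v 1) (List.ofFn fun i : Fin m => v i.succ.succ)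
    congr 1
    have := prod_eq_listMass P m (fun i => v i.succ)
    simp only [Fin.succ_castSucc] at this ⊢
    exact this

lemma pathMass_eq_listMass (P : S → S → ℝ) (π : MCPath S) :
    pathMass P π = listMass P (π.2 0) (List.ofFn fun i : Fin π.1 => π.2 i.succ) :=
  prod_eq_listMass P π.1 π.2

lemma pathMass_nonneg_s18 {P : S → S → ℝ} (hP : ∀ a b, 0 ≤ P a b) (π : MCPath S) :
    0 ≤ pathMass P π :=
  Finset.prod_nonneg fun _ _ => hP _ _

/-- Hitting paths from a common start are prefix-free (as lists of visited states). -/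
lemma hitting_prefix_free {T : Set S} {s : S} {π π' : MCPath S}
    (h : IsHitting T s π) (h' : IsHitting T s π')
    (hp : (List.ofFn fun i : Fin π.1 => π.2 i.succ) <+: (List.ofFn fun i : Fin π'.1 => π'.2 i.succ)) :
    π = π' := by
  obtain ⟨m, v⟩ := π
  obtain ⟨m', v'⟩ := π'
  have hlen : m ≤ m' := by
    have := hp.length_le
    simpa using this
  have hval : ∀ j : ℕ, (hj : j ≤ m) → v ⟨j, by omega⟩ = v' ⟨j, by omega⟩ := by
    intro j hj
    cases j with
    | zero =>
      show v 0 = v' 0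
      exact h.1.trans h'.1.symm
    | succ j =>
      have hg := hp.getElem (i := j) (by simpa using hj)
      simp only [List.getElem_ofFn] at hg
      have e1 : (⟨j, by omega⟩ : Fin m).succ = ⟨j+1, by omega⟩ := rfl
      have e2 : (⟨j, by omega⟩ : Fin m').succ = ⟨j+1, by omega⟩ := rfl
      rw [e1] at hg
      convert hg using 2 <;> rfl
  -- m = m'
  rcases lt_or_eq_of_le hlen with hlt | heq
  · exfalso
    have h1 : v (Fin.last m) ∈ T := h.2.1
    have h2 : v' ((⟨m, hlt⟩ : Fin m').castSucc) ∉ T := h'.2.2 ⟨m, hlt⟩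
    have : v (Fin.last m) = v' ((⟨m, hlt⟩ : Fin m').castSucc) := by
      have := hval m le_rfl
      convert this using 2 <;> rfl
    exact h2 (this ▸ h1)
  · subst heq
    have : v = v' := by
      funext i
      have := hval i.1 (by omega)
      convert this using 2 <;> exact (Fin.eta i i.isLt).symm
    rw [this]

lemma ofFn_getD {l : List S} {N : ℕ} (h : l.length = N) (d : S) :
    List.ofFn (fun i : Fin N => l.getD i d) = l := by
  apply List.ext_getElem (by simp [h])
  intro i h1 h2
  simp only [List.getElem_ofFn]
  exact List.getD_eq_getElem l d h2

/-- key finiteness bound: any finite family of hitting paths has total mass at most 1 -/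
lemma sum_hitting_le {P : S → S → ℝ} (hP : ∀ a b, 0 ≤ P a b)
    (hrow : ∀ s, ∑ s', P s s' = 1) (T : Set S) (s : S)
    (u : Finset {π : MCPath S // IsHitting T s π}) :
    ∑ π ∈ u, pathMass P π.1 ≤ 1 := by
  classical
  set L : {π : MCPath S // IsHitting T s π} → List S :=
    fun π => List.ofFn (fun i : Fin π.1.1 => π.1.2 i.succ) with hL
  set N : ℕ := u.sup fun π => π.1.1 with hN
  have hmN : ∀ π ∈ u, π.1.1 ≤ N := fun π h => Finset.le_sup (f := fun π => π.1.1) h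
  have hLlen : ∀ π, (L π).length = π.1.1 := fun π => by simp [hL]
  -- the extension finset
  set t : Finset (Σ π : {π : MCPath S // IsHitting T s π}, Fin (N - π.1.1) → S) :=
    u.sigma (fun _ => Finset.univ) with ht
  set e : (Σ π : {π : MCPath S // IsHitting T s π}, Fin (N - π.1.1) → S) → (Fin N → S) :=
    fun x => fun i => (L x.1 ++ List.ofFn x.2).getD i s with he
  have hlen : ∀ x, x ∈ t → (L x.1 ++ List.ofFn x.2).length = N := by
    intro x hx
    have : x.1 ∈ u := (Finset.mem_sigma.mp hx).1
    have := hmN x.1 this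
    simp [hLlen, this]
  have hofe : ∀ x ∈ t, List.ofFn (e x) = L x.1 ++ List.ofFn x.2 := by
    intro x hx
    exact ofFn_getD (hlen x hx) s
  have hstart : ∀ π : {π : MCPath S // IsHitting T s π}, π.1.2 0 = s := fun π => π.2.1
  calc ∑ π ∈ u, pathMass P π.1
      = ∑ π ∈ u, listMass P s (L π) := by
        refine Finset.sum_congr rfl fun π _ => ?_
        rw [pathMass_eq_listMass, hstart π]
    _ = ∑ π ∈ u, ∑ f : Fin (N - π.1.1) → S, listMass P s (L π ++ List.ofFn f) := by
        refine Finset.sum_congr rfl fun π _ => ?_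
        rw [sum_listMass_ext hrow]
    _ = ∑ x ∈ t, listMass P s (L x.1 ++ List.ofFn x.2) := by
        rw [ht, Finset.sum_sigma]
    _ = ∑ x ∈ t, listMass P s (List.ofFn (e x)) := by
        refine Finset.sum_congr rfl fun x hx => ?_
        rw [hofe x hx]
    _ = ∑ g ∈ t.image e, listMass P s (List.ofFn g) := by
        refine (Finset.sum_image (g := e) (f := fun g => listMass P s (List.ofFn g)) (s := t) ?_).symm
        intro x hx y hy hxy
        -- reconstruct the lists
        have hl : L x.1 ++ List.ofFn x.2 = L y.1 ++ List.ofFn y.2 := by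
          rw [← hofe x hx, ← hofe y hy, hxy]
        -- one of the L's is a prefix of the other
        have hpre : L x.1 <+: L y.1 ∨ L y.1 <+: L x.1 := by
          rcases le_total (L x.1).length (L y.1).length with hle | hle
          · exact Or.inl (List.prefix_of_prefix_length_le ⟨_, hl⟩ (List.prefix_append _ _) hle)
          · exact Or.inr (List.prefix_of_prefix_length_le ⟨_, hl.symm⟩ (List.prefix_append _ _) hle)
        have h1 : x.1 = y.1 := by
          rcases hpre with hpre | hpre
          · exact Subtype.ext (hitting_prefix_free x.1.2 y.1.2 hpre)
          · exact (Subtype.ext (hitting_prefix_free y.1.2 x.1.2 hpre)).symm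
        obtain ⟨π, f⟩ := x
        obtain ⟨π', f'⟩ := y
        cases h1
        have : List.ofFn f = List.ofFn f' := by
          simpa using hl
        have : f = f' := List.ofFn_injective this
        rw [this]
    _ ≤ ∑ g : Fin N → S, listMass P s (List.ofFn g) := by
        apply Finset.sum_le_sum_of_subset_of_nonneg (Finset.subset_univ _)
        intro g _ _
        exact listMass_nonneg hP s _
    _ = 1 := sum_listMass hrow N s

lemma summable_hitting {P : S → S → ℝ} (hP : ∀ a b, 0 ≤ P a b)
    (hrow : ∀ s, ∑ s', P s s' = 1) (T : Set S) (s : S) :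
    Summable (fun π : {π : MCPath S // IsHitting T s π} => pathMass P π.1) :=
  summable_of_sum_le (fun π => pathMass_nonneg_s18 hP π.1) (sum_hitting_le hP hrow T s)

end aux


section gadget

variable {n : ℕ} (P : Fin n → Fin n → ℝ) (ι : Fin n) (lam : ℝ)

lemma extP_nonneg (hpos : ∀ s s', 0 ≤ P s s') (hlam : lam ∈ Set.Icc (0 : ℝ) 1) :
    ∀ a b, 0 ≤ extP P ι lam a b := by
  obtain ⟨h0, h1⟩ := hlam
  rintro (a | i) (b | j) <;> simp only [extP] <;>
    repeat' first
      | positivity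
      | exact hpos a b
      | split_ifs <;> first | linarith | positivity

lemma extP_row (hrow : ∀ s, ∑ s', P s s' = 1) :
    ∀ a, ∑ b, extP P ι lam a b = 1 := by
  rintro (a | i)
  · rw [Fintype.sum_sum_type]
    simp only [extP]
    rw [hrow a]
    simp
  · rw [Fintype.sum_sum_type]
    simp only [extP]
    fin_cases i <;>
      simp [Fin.sum_univ_three, Finset.sum_ite_eq'] <;> ring


/-- prepend the fresh initial state to a path of the original chain -/
def extCons {n : ℕ} (π : MCPath (Fin n)) : MCPath (Fin n ⊕ Fin 3) :=
  ⟨π.1 + 1, Fin.cons (Sum.inr 0) (Sum.inl ∘ π.2)⟩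

lemma inr_not_mem_T' (T : Set (Fin n)) (j : Fin 3) (hj : j ≠ 1) :
    (Sum.inr j : Fin n ⊕ Fin 3) ∉ (Sum.inl '' T ∪ {Sum.inr 1}) := by
  rintro (⟨a, _, h⟩ | h)
  · exact Sum.inl_ne_inr h
  · exact hj (Sum.inr.inj h)

lemma extCons_isHitting {T : Set (Fin n)} {π : MCPath (Fin n)}
    (h : IsHitting T ι π) :
    IsHitting (Sum.inl '' T ∪ {Sum.inr 1}) (Sum.inr 0) (extCons π) := by
  obtain ⟨m, v⟩ := π
  obtain ⟨h0, hlast, hmid⟩ := h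
  refine ⟨rfl, ?_, ?_⟩
  · show (Fin.cons (Sum.inr 0) (Sum.inl ∘ v) : Fin (m+2) → _) (Fin.last (m+1)) ∈ _
    rw [show Fin.last (m+1) = (Fin.last m).succ from rfl, Fin.cons_succ]
    exact Or.inl ⟨v (Fin.last m), hlast, rfl⟩
  · intro i
    induction i using Fin.cases with
    | zero =>
      show (Sum.inr 0 : Fin n ⊕ Fin 3) ∉ _
      exact inr_not_mem_T' T 0 (by decide)
    | succ j =>
      show (Fin.cons (Sum.inr 0) (Sum.inl ∘ v) : Fin (m+2) → _) j.succ.castSucc ∉ _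
      rw [← Fin.succ_castSucc, Fin.cons_succ]
      rintro (⟨a, ha, hea⟩ | hea)
      · exact hmid j (by rw [Sum.inl.inj hea] at ha; exact ha)
      · exact Sum.inl_ne_inr hea

lemma extCons_mass {π : MCPath (Fin n)} (h0 : π.2 0 = ι) :
    pathMass (extP P ι lam) (extCons π) = pathMass P π / 2 := by
  obtain ⟨m, v⟩ := π
  show (∏ i : Fin (m+1), extP P ι lam
      ((Fin.cons (Sum.inr 0) (Sum.inl ∘ v) : Fin (m+2) → _) i.castSucc)
      ((Fin.cons (Sum.inr 0) (Sum.inl ∘ v) : Fin (m+2) → _) i.succ)) = _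
  rw [Fin.prod_univ_succ]
  have e0 : ((0 : Fin (m+1)).castSucc) = (0 : Fin (m+2)) := rfl
  have e1 : ((0 : Fin (m+1)).succ) = ((0 : Fin m.succ).succ : Fin (m+2)) := rfl
  rw [e0, Fin.cons_zero, e1, Fin.cons_succ]
  have hfirst : extP P ι lam (Sum.inr 0) ((Sum.inl ∘ v) 0) = 1 / 2 := by
    show extP P ι lam (Sum.inr 0) (Sum.inl (v 0)) = 1 / 2
    rw [show v 0 = ι from h0]
    simp [extP]
  rw [hfirst]
  have hrest : ∀ j : Fin m,
      extP P ι lam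
        ((Fin.cons (Sum.inr 0) (Sum.inl ∘ v) : Fin (m+2) → _) j.succ.castSucc)
        ((Fin.cons (Sum.inr 0) (Sum.inl ∘ v) : Fin (m+2) → _) j.succ.succ)
      = P (v j.castSucc) (v j.succ) := by
    intro j
    rw [← Fin.succ_castSucc, Fin.cons_succ, Fin.cons_succ]
    rfl
  rw [Finset.prod_congr rfl fun j _ => hrest j]
  show 1 / 2 * pathMass P ⟨m, v⟩ = pathMass P ⟨m, v⟩ / 2
  ring


lemma extP_from_inr0 {z : Fin n ⊕ Fin 3} (h : extP P ι lam (Sum.inr 0) z ≠ 0) :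
    z = Sum.inl ι ∨ z = Sum.inr 1 ∨ z = Sum.inr 2 := by
  rcases z with b | j
  · left
    simp only [extP] at h
    split_ifs at h with hc
    · rw [hc.2]
    · exact absurd rfl h
  · right
    fin_cases j
    · exfalso; apply h; simp [extP]
    · exact Or.inl rfl
    · exact Or.inr rfl

lemma extP_from_inr2 {z : Fin n ⊕ Fin 3} (h : extP P ι lam (Sum.inr 2) z ≠ 0) :
    z = Sum.inr 2 := by
  rcases z with b | j
  · exfalso; apply h; simp [extP]
  · fin_cases j
    · exfalso; apply h; simp [extP]
    · exfalso; apply h; simp [extP]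
    · rfl

lemma extP_from_inl {a : Fin n} {z : Fin n ⊕ Fin 3}
    (h : extP P ι lam (Sum.inl a) z ≠ 0) : z.isLeft := by
  rcases z with b | j
  · rfl
  · exfalso; apply h; simp [extP]


/-- the direct `ι' → t★` hitting path -/
def bpath (n : ℕ) : MCPath (Fin n ⊕ Fin 3) := ⟨1, ![Sum.inr 0, Sum.inr 1]⟩

lemma bpath_isHitting (T : Set (Fin n)) :
    IsHitting (Sum.inl '' T ∪ {Sum.inr 1}) (Sum.inr 0) (bpath n) := by
  refine ⟨rfl, Or.inr rfl, ?_⟩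
  intro i
  fin_cases i
  exact inr_not_mem_T' T 0 (by decide)

lemma bpath_mass : pathMass (extP P ι lam) (bpath n) = (1 - lam) / 2 := by
  show (∏ i : Fin 1, _) = _
  rw [Fin.prod_univ_one]
  show extP P ι lam (Sum.inr 0) (Sum.inr 1) = (1 - lam) / 2
  simp [extP]

/-- classification of big hitting paths with nonzero mass -/
lemma classify {T : Set (Fin n)} {x : MCPath (Fin n ⊕ Fin 3)}
    (hv : IsHitting (Sum.inl '' T ∪ {Sum.inr 1}) (Sum.inr 0) x)
    (hx : pathMass (extP P ι lam) x ≠ 0) :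
    x = bpath n ∨ ∃ π : MCPath (Fin n), IsHitting T ι π ∧ x = extCons π := by
  obtain ⟨m, v⟩ := x
  obtain ⟨h0, hlast, hmid⟩ := hv
  have h0 : v 0 = Sum.inr 0 := h0
  have hlast : v (Fin.last m) ∈ (Sum.inl '' T ∪ {Sum.inr 1}) := hlast
  have hmid : ∀ i : Fin m, v i.castSucc ∉ (Sum.inl '' T ∪ {Sum.inr 1}) := hmid
  have hfac : ∀ k : Fin m, extP P ι lam (v k.castSucc) (v k.succ) ≠ 0 := by
    have := Finset.prod_ne_zero_iff.mp hx
    intro k; exact this k (Finset.mem_univ k)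
  rcases Nat.eq_zero_or_pos m with hm | hm
  · exfalso
    subst hm
    rw [show Fin.last 0 = 0 from rfl, h0] at hlast
    exact inr_not_mem_T' T 0 (by decide) hlast
  obtain ⟨k, rfl⟩ : ∃ k, m = k + 1 := ⟨m - 1, by omega⟩
  have hf0 := hfac 0
  rw [show ((0 : Fin (k+1)).castSucc) = 0 from rfl, h0,
    show ((0 : Fin (k+1)).succ) = 1 from rfl] at hf0
  rcases extP_from_inr0 P ι lam hf0 with hv1 | hv1 | hv1
  · -- second state is inl ι : comes from the original chain
    right
    have hleft : ∀ j : ℕ, (h1 : 1 ≤ j) → (h2 : j ≤ k + 1) →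
        (v ⟨j, by omega⟩).isLeft = true := by
      intro j
      induction j with
      | zero => omega
      | succ j ih =>
        intro _ h2
        rcases Nat.eq_zero_or_pos j with hj | hj
        · subst hj
          rw [show (⟨1, by omega⟩ : Fin (k+2)) = 1 from rfl, hv1]
          rfl
        · have hvj := ih hj (by omega)
          have hf := hfac ⟨j, by omega⟩
          rw [show ((⟨j, by omega⟩ : Fin (k+1)).castSucc) = ⟨j, by omega⟩ from rfl,
            show ((⟨j, by omega⟩ : Fin (k+1)).succ) = ⟨j+1, by omega⟩ from rfl] at hf
          obtain ⟨a, ha⟩ := Sum.isLeft_iff.mp hvj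
          rw [ha] at hf
          exact extP_from_inl P ι lam hf
    have hleft' : ∀ j : Fin (k+1), (v j.succ).isLeft = true := fun j =>
      hleft (j.1 + 1) (by omega) (by omega)
    set w : Fin (k+1) → Fin n := fun j => (v j.succ).getLeft (hleft' j) with hw
    have hvw : ∀ j : Fin (k+1), v j.succ = Sum.inl (w j) := fun j =>
      (Sum.inl_getLeft _ (hleft' j)).symm
    have hw0 : w 0 = ι := by
      have := hvw 0
      rw [show ((0 : Fin (k+1)).succ) = 1 from rfl, hv1] at this
      exact (Sum.inl.inj this).symm
    refine ⟨⟨k, w⟩, ⟨hw0, ?_, ?_⟩, ?_⟩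
    · show w (Fin.last k) ∈ T
      have := hvw (Fin.last k)
      rw [Fin.succ_last] at this
      rw [this] at hlast
      rcases hlast with ⟨a, ha, hea⟩ | hea
      · rw [Sum.inl.inj hea] at ha; exact ha
      · exact absurd hea (by simp)
    · intro j
      show w j.castSucc ∉ T
      intro hmem
      apply hmid j.succ
      rw [← Fin.succ_castSucc, hvw j.castSucc]
      exact Or.inl ⟨w j.castSucc, hmem, rfl⟩
    · have hveq : v = Fin.cons (Sum.inr 0) (Sum.inl ∘ w) := by
        funext i
        induction i using Fin.cases with
        | zero => rw [Fin.cons_zero]; exact h0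
        | succ j => rw [Fin.cons_succ]; exact hvw j
      show (⟨k + 1, v⟩ : MCPath (Fin n ⊕ Fin 3))
          = ⟨k + 1, Fin.cons (Sum.inr 0) (Sum.inl ∘ w)⟩
      rw [hveq]
  · -- second state is t★ : this is the direct path
    left
    have hk : k = 0 := by
      by_contra hk
      obtain ⟨k', rfl⟩ : ∃ k', k = k' + 1 := ⟨k - 1, by omega⟩
      apply hmid ⟨1, by omega⟩
      rw [show ((⟨1, by omega⟩ : Fin (k'+2)).castSucc) = 1 from rfl, hv1]
      exact Or.inr rfl
    subst hk
    have hveq : v = ![Sum.inr 0, Sum.inr 1] := by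
      funext i
      fin_cases i
      · exact h0
      · exact hv1
    show (⟨1, v⟩ : MCPath (Fin n ⊕ Fin 3)) = ⟨1, ![Sum.inr 0, Sum.inr 1]⟩
    rw [hveq]
  · -- second state is ⊥ : impossible, the path would never hit
    exfalso
    have habs : ∀ j : ℕ, (h1 : 1 ≤ j) → (h2 : j ≤ k + 1) →
        v ⟨j, by omega⟩ = Sum.inr 2 := by
      intro j
      induction j with
      | zero => omega
      | succ j ih =>
        intro _ h2
        rcases Nat.eq_zero_or_pos j with hj | hj
        · subst hj
          rw [show (⟨1, by omega⟩ : Fin (k+2)) = 1 from rfl, hv1]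
        · have hvj := ih hj (by omega)
          have hf := hfac ⟨j, by omega⟩
          rw [show ((⟨j, by omega⟩ : Fin (k+1)).castSucc) = ⟨j, by omega⟩ from rfl,
            show ((⟨j, by omega⟩ : Fin (k+1)).succ) = ⟨j+1, by omega⟩ from rfl, hvj] at hf
          exact extP_from_inr2 P ι lam hf
    have := habs (k+1) (by omega) le_rfl
    rw [show (⟨k+1, by omega⟩ : Fin (k+2)) = Fin.last (k+1) from rfl] at this
    rw [this] at hlast
    exact inr_not_mem_T' T 2 (by decide) hlast

lemma extCons_inj {n : ℕ} : Function.Injective (extCons (n := n)) := by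
  rintro ⟨m, w⟩ ⟨m', w'⟩ h
  have h1 : m = m' := by
    have := congrArg Sigma.fst h
    simpa [extCons] using this
  subst h1
  have h2 : (Fin.cons (Sum.inr 0) (Sum.inl ∘ w) : Fin (m+2) → (Fin n ⊕ Fin 3))
      = Fin.cons (Sum.inr 0) (Sum.inl ∘ w') := by
    have := (Sigma.mk.inj_iff.mp h).2
    exact eq_of_heq this
  have h3 : w = w' := by
    funext j
    have := congrFun h2 j.succ
    rw [Fin.cons_succ, Fin.cons_succ] at this
    exact Sum.inl.inj this
  rw [h3]


lemma extCons_ne_bpath (π : MCPath (Fin n)) : extCons π ≠ bpath n := by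
  intro h
  obtain ⟨m, w⟩ := π
  have h1 : m = 0 := by
    have := congrArg Sigma.fst h
    simpa [extCons, bpath] using this
  subst h1
  have h2 : (Fin.cons (Sum.inr 0) (Sum.inl ∘ w) : Fin 2 → (Fin n ⊕ Fin 3))
      = ![Sum.inr 0, Sum.inr 1] := by
    have := (Sigma.mk.inj_iff.mp h).2
    exact eq_of_heq this
  have h3 := congrFun h2 ((0 : Fin 1).succ)
  rw [Fin.cons_succ] at h3
  simp only [show ((0 : Fin 1).succ) = (1 : Fin 2) from rfl, Matrix.cons_val_one,
    Matrix.head_cons, Function.comp_apply] at h3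
  exact Sum.inl_ne_inr h3

theorem extP_main {n : ℕ} (P : Fin n → Fin n → ℝ) (ι : Fin n)
    (hpos : ∀ s s', 0 ≤ P s s') (hrow : ∀ s, ∑ s', P s s' = 1)
    (T : Set (Fin n)) (lam : ℝ) (hlam : lam ∈ Set.Icc (0 : ℝ) 1) :
    reachProb (extP P ι lam) (Sum.inl '' T ∪ {Sum.inr 1}) (Sum.inr 0) =
      (1 - lam) / 2 + reachProb P T ι / 2 := by
  classical
  have hQpos := extP_nonneg P ι lam hpos hlam
  have hQrow := extP_row P ι lam hrow
  have hsum : Summable (fun π : {π : MCPath (Fin n ⊕ Fin 3) //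
      IsHitting (Sum.inl '' T ∪ {Sum.inr 1}) (Sum.inr 0) π} =>
      pathMass (extP P ι lam) π.1) :=
    summable_hitting hQpos hQrow _ _
  set b : {π : MCPath (Fin n ⊕ Fin 3) //
      IsHitting (Sum.inl '' T ∪ {Sum.inr 1}) (Sum.inr 0) π} :=
    ⟨bpath n, bpath_isHitting T⟩ with hbdef
  rw [reachProb, Summable.tsum_eq_add_tsum_ite hsum b]
  have hb : pathMass (extP P ι lam) (b : {π : MCPath (Fin n ⊕ Fin 3) //
      IsHitting (Sum.inl '' T ∪ {Sum.inr 1}) (Sum.inr 0) π}).1 = (1 - lam) / 2 :=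
    bpath_mass P ι lam
  rw [hb]
  congr 1
  rw [reachProb, ← tsum_div_const]
  refine tsum_eq_tsum_of_ne_zero_bij
    (i := fun π => ⟨extCons π.1.1, extCons_isHitting ι π.1.2⟩) ?_ ?_ ?_
  · -- injective
    intro x y hxy
    have : extCons x.1.1 = extCons y.1.1 := congrArg Subtype.val hxy
    exact Subtype.ext (Subtype.ext (extCons_inj this))
  · -- support inclusion
    rintro ⟨x, hhit⟩ hx
    simp only [Function.mem_support, ne_eq] at hx
    have hxb : (⟨x, hhit⟩ : {π : MCPath (Fin n ⊕ Fin 3) //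
        IsHitting (Sum.inl '' T ∪ {Sum.inr 1}) (Sum.inr 0) π}) ≠ b := by
      intro h; rw [h] at hx; simp at hx
    have hmass : pathMass (extP P ι lam) x ≠ 0 := by
      intro h; apply hx; rw [if_neg hxb, h]
    rcases classify P ι lam hhit hmass with hcase | ⟨π, hπ, rfl⟩
    · exact absurd (Subtype.ext hcase) hxb
    · have hmass' : pathMass P π / 2 ≠ 0 := by
        rw [← extCons_mass P ι lam hπ.1]; exact hmass
      exact ⟨⟨⟨π, hπ⟩, hmass'⟩, rfl⟩
  · -- values agree
    rintro ⟨⟨π, hπ⟩, -⟩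
    · show (if _ then (0:ℝ) else pathMass (extP P ι lam) (extCons π)) = pathMass P π / 2
      rw [if_neg, extCons_mass P ι lam hπ.1]
      intro h
      exact extCons_ne_bpath π (congrArg Subtype.val h)

end gadget


/-- Fixed-threshold reduction (Section 3.5 of the paper): with `D'` the extended chain,
`Pr_{D'}(◇(T ∪ {t★})) = (Pr_D(◇T) + 1 - λ)/2`, and consequently for every relation
`⋈ ∈ {<, ≤, ≥, >}`, `Pr_{D'}(◇(T ∪ {t★})) ⋈ 1/2` iff `Pr_D(◇T) ⋈ λ`. -/
theorem extP_reachProb_and_threshold {n : ℕ} (P : Fin n → Fin n → ℝ) (ι : Fin n)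
    (hpos : ∀ s s', 0 ≤ P s s') (hrow : ∀ s, ∑ s', P s s' = 1)
    (T : Set (Fin n)) (lam : ℝ) (hlam : lam ∈ Set.Icc (0 : ℝ) 1) :
    reachProb (extP P ι lam) (Sum.inl '' T ∪ {Sum.inr 1}) (Sum.inr 0) =
      (reachProb P T ι + 1 - lam) / 2 ∧
    (reachProb (extP P ι lam) (Sum.inl '' T ∪ {Sum.inr 1}) (Sum.inr 0) < 1 / 2 ↔
      reachProb P T ι < lam) ∧
    (reachProb (extP P ι lam) (Sum.inl '' T ∪ {Sum.inr 1}) (Sum.inr 0) ≤ 1 / 2 ↔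
      reachProb P T ι ≤ lam) ∧
    (reachProb (extP P ι lam) (Sum.inl '' T ∪ {Sum.inr 1}) (Sum.inr 0) ≥ 1 / 2 ↔
      reachProb P T ι ≥ lam) ∧
    (reachProb (extP P ι lam) (Sum.inl '' T ∪ {Sum.inr 1}) (Sum.inr 0) > 1 / 2 ↔
      reachProb P T ι > lam) := by
  have key := extP_main P ι hpos hrow T lam hlam
  have h1 : reachProb (extP P ι lam) (Sum.inl '' T ∪ {Sum.inr 1}) (Sum.inr 0) =
      (reachProb P T ι + 1 - lam) / 2 := by rw [key]; ring
  refine ⟨h1, ?_, ?_, ?_, ?_⟩ <;> rw [h1] <;>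
    exact ⟨fun h => by linarith, fun h => by linarith⟩
end
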